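/- The columns of the cofactor matrix of the gradient of a twice continuously differentiable map are divergence-free: for y : ℝ³ → ℝ³ of class C², for each i, ∑_α ∂_α (cof Dy)_{iα} = 0 (the Piola identity). -/

import Mathlib

open MeasureTheory Matrix

/-- The cofactor matrix: transpose of the adjugate, so `F * (cof F)ᵀ = det F • 1`. -/
noncomputable def cof (A : Matrix (Fin 3) (Fin 3) ℝ) : Matrix (Fin 3) (Fin 3) ℝ :=
  (Matrix.adjugate A)ᵀ

/-- The Jacobian matrix `(Dy)_{iα} = ∂ y_i / ∂ x_α` of a map `y : ℝ³ → ℝ³`. -/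
noncomputable def jacobian (y : (Fin 3 → ℝ) → (Fin 3 → ℝ)) (x : Fin 3 → ℝ) :
    Matrix (Fin 3) (Fin 3) ℝ :=
  Matrix.of fun i α => fderiv ℝ y x (Pi.single α 1) i

/-- **Piola identity**: the columns of the cofactor matrix of the gradient of a
`C²` map `y : ℝ³ → ℝ³` are divergence free: `∑_α ∂_α (cof Dy)_{iα} = 0`. -/
theorem piola_identity (y : (Fin 3 → ℝ) → (Fin 3 → ℝ)) (hy : ContDiff ℝ 2 y) :
    ∀ (x : Fin 3 → ℝ) (i : Fin 3),
      ∑ α : Fin 3, fderiv ℝ (fun z => cof (jacobian y z) i α) x (Pi.single α 1) = 0 := by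
  intro x i
  have hy1 : ContDiff ℝ 1 (fderiv ℝ y) := hy.fderiv_right (by norm_num)
  have hd : ∀ z, HasFDerivAt y (fderiv ℝ y z) z := fun z =>
    (hy.differentiable (by norm_num) z).hasFDerivAt
  set B := fderiv ℝ (fderiv ℝ y) x with hBdef
  have hB : HasFDerivAt (fderiv ℝ y) B x := (hy1.differentiable (by norm_num) x).hasFDerivAt
  have hs : ∀ (e p q : Fin 3),
      B (Pi.single p 1) (Pi.single q 1) e = B (Pi.single q 1) (Pi.single p 1) e := fun e p q =>
    congrFun (second_derivative_symmetric hd hB _ _) e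
  have hg : ∀ (j β : Fin 3), HasFDerivAt (fun z => fderiv ℝ y z (Pi.single β 1) j)
      (((ContinuousLinearMap.proj j).comp
        (ContinuousLinearMap.apply ℝ (Fin 3 → ℝ) (Pi.single β 1))).comp B) x := by
    intro j β
    exact HasFDerivAt.comp x (ContinuousLinearMap.hasFDerivAt
      ((ContinuousLinearMap.proj j).comp
        (ContinuousLinearMap.apply ℝ (Fin 3 → ℝ) (Pi.single β 1)))) hB
  have main : ∀ (a b c d α : Fin 3),
      fderiv ℝ (fun z => fderiv ℝ y z (Pi.single b 1) a * fderiv ℝ y z (Pi.single d 1) c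
        - fderiv ℝ y z (Pi.single d 1) a * fderiv ℝ y z (Pi.single b 1) c) x (Pi.single α 1)
      = fderiv ℝ y x (Pi.single b 1) a * B (Pi.single α 1) (Pi.single d 1) c
        + fderiv ℝ y x (Pi.single d 1) c * B (Pi.single α 1) (Pi.single b 1) a
        - (fderiv ℝ y x (Pi.single d 1) a * B (Pi.single α 1) (Pi.single b 1) c
        + fderiv ℝ y x (Pi.single b 1) c * B (Pi.single α 1) (Pi.single d 1) a) := by
    intro a b c d α
    rw [(((hg a b).fun_mul (hg c d)).fun_sub ((hg a d).fun_mul (hg c b))).fderiv]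
    simp [ContinuousLinearMap.comp_apply, ContinuousLinearMap.proj_apply,
      ContinuousLinearMap.apply_apply, smul_eq_mul]
  have hcof : ∀ (a b c d i α : Fin 3),
      (∀ A : Matrix (Fin 3) (Fin 3) ℝ, cof A i α = A a b * A c d - A a d * A c b) →
      fderiv ℝ (fun z => cof (jacobian y z) i α) x (Pi.single α 1)
      = fderiv ℝ y x (Pi.single b 1) a * B (Pi.single α 1) (Pi.single d 1) c
        + fderiv ℝ y x (Pi.single d 1) c * B (Pi.single α 1) (Pi.single b 1) a
        - (fderiv ℝ y x (Pi.single d 1) a * B (Pi.single α 1) (Pi.single b 1) c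
        + fderiv ℝ y x (Pi.single b 1) c * B (Pi.single α 1) (Pi.single d 1) a) := by
    intro a b c d i α h
    rw [show (fun z => cof (jacobian y z) i α)
        = (fun z => fderiv ℝ y z (Pi.single b 1) a * fderiv ℝ y z (Pi.single d 1) c
          - fderiv ℝ y z (Pi.single d 1) a * fderiv ℝ y z (Pi.single b 1) c) from
      funext fun z => h (jacobian y z), main a b c d α]
  rw [Fin.sum_univ_three]
  fin_cases i <;>
    simp only [Fin.isValue, Fin.zero_eta, Fin.mk_one, Fin.reduceFinMk]
  · rw [hcof 1 1 2 2 0 0 (fun A => by simp [cof, Matrix.adjugate_fin_three]),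
       hcof 1 2 2 0 0 1 (fun A => by simp [cof, Matrix.adjugate_fin_three]; ring),
       hcof 1 0 2 1 0 2 (fun A => by simp [cof, Matrix.adjugate_fin_three])]
    linear_combination (fderiv ℝ y x (Pi.single 1 1) 1) * hs 2 0 2
      + (fderiv ℝ y x (Pi.single 2 1) 2) * hs 1 0 1
      - (fderiv ℝ y x (Pi.single 2 1) 1) * hs 2 0 1
      - (fderiv ℝ y x (Pi.single 1 1) 2) * hs 1 0 2
      + (fderiv ℝ y x (Pi.single 0 1) 2) * hs 1 1 2
      - (fderiv ℝ y x (Pi.single 0 1) 1) * hs 2 1 2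
  · rw [hcof 0 2 2 1 1 0 (fun A => by simp [cof, Matrix.adjugate_fin_three]; ring),
       hcof 0 0 2 2 1 1 (fun A => by simp [cof, Matrix.adjugate_fin_three]),
       hcof 0 1 2 0 1 2 (fun A => by simp [cof, Matrix.adjugate_fin_three]; ring)]
    linear_combination (fderiv ℝ y x (Pi.single 2 1) 0) * hs 2 0 1
      + (fderiv ℝ y x (Pi.single 1 1) 2) * hs 0 0 2
      - (fderiv ℝ y x (Pi.single 1 1) 0) * hs 2 0 2
      - (fderiv ℝ y x (Pi.single 2 1) 2) * hs 0 0 1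
      + (fderiv ℝ y x (Pi.single 0 1) 0) * hs 2 1 2
      - (fderiv ℝ y x (Pi.single 0 1) 2) * hs 0 1 2
  · rw [hcof 0 1 1 2 2 0 (fun A => by simp [cof, Matrix.adjugate_fin_three]),
       hcof 0 2 1 0 2 1 (fun A => by simp [cof, Matrix.adjugate_fin_three]; ring),
       hcof 0 0 1 1 2 2 (fun A => by simp [cof, Matrix.adjugate_fin_three])]
    linear_combination (fderiv ℝ y x (Pi.single 1 1) 0) * hs 1 0 2
      + (fderiv ℝ y x (Pi.single 2 1) 1) * hs 0 0 1
      - (fderiv ℝ y x (Pi.single 2 1) 0) * hs 1 0 1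
      - (fderiv ℝ y x (Pi.single 1 1) 1) * hs 0 0 2
      + (fderiv ℝ y x (Pi.single 0 1) 1) * hs 0 1 2
      - (fderiv ℝ y x (Pi.single 0 1) 0) * hs 1 1 2
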